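/- Let X be a Banach space and (A(n))_{n∈Z−\{0}} a sequence of bounded linear operators on X. Suppose that: (a) for every bounded sequence (y(n))_{n∈Z−\{0}} in X there exists a bounded sequence (x(n))_{n∈Z−} in X with x(n+1) = A(n)x(n) + y(n) for all n ∈ Z−\{0}; (b) the subspace U of X consisting of all v ∈ X for which there exists a bounded sequence (x(n))_{n∈Z−} in X with x(0) = v and x(n) = A(n−1)x(n−1) for all n ≤ 0 (not assumed closed) admits a closed subspace Z of X with X = U ⊕ Z; and (c) the only bounded sequence (x(n))_{n∈Z−} in X with x(0) = 0 and x(n) = A(n−1)x(n−1) for all n ≤ 0 is the zero sequence. Then the system x(n+1) = A(n)x(n) admits an exponential dichotomy on Z−. -/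

import Mathlib

open Real ContinuousLinearMap

noncomputable section

universe u

variable {X : Type u} [NormedAddCommGroup X] [NormedSpace ℝ X]

/-- The cocycle associated with the system `x(n+1) = A(n) x(n)`, as a function of the
number of steps: `cocycleAux A n k = A(n+k-1) ∘ ⋯ ∘ A(n)`. -/
def cocycleAux (A : ℤ → X →L[ℝ] X) (n : ℤ) : ℕ → (X →L[ℝ] X)
  | 0 => ContinuousLinearMap.id ℝ X
  | k + 1 => (A (n + k)).comp (cocycleAux A n k)

/-- The cocycle `Φ(m, n) = A(m-1) ⋯ A(n)` for `m > n`, and `Φ(n, n) = Id`. -/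
def Phi (A : ℤ → X →L[ℝ] X) (m n : ℤ) : X →L[ℝ] X :=
  cocycleAux A n (m - n).toNat

/-- The system `x(n+1) = A(n) x(n)`, `n ∈ J'`, admits an exponential dichotomy on `J`
with respect to the family of (bounded) projections `P(n)`, `n ∈ J`:
there are constants `K, α > 0` such that
(i) `P(n)` are projections, `A(n) P(n) = P(n+1) A(n)` for `n ∈ J'`, and `A(n)` maps
`ker P(n)` bijectively onto `ker P(n+1)` for `n ∈ J'`;
(ii) `‖Φ(m,n) P(n)‖ ≤ K e^{-α (m-n)}` for `m ≥ n` in `J`;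
(iii) `‖Φ(m,n) (Id - P(n))‖ ≤ K e^{-α (n-m)}` for `m ≤ n` in `J`, where
`Φ(m,n) : ker P(n) → ker P(m)` denotes the inverse of `Φ(n,m)` restricted to `ker P(m)`;
the latter is phrased as: whenever `x ∈ ker P(m)` and `Φ(n,m) x = (Id - P(n)) y`,
then `‖x‖ ≤ K e^{-α (n-m)} ‖y‖`. -/
def IsExpDichotomy (J J' : Set ℤ) (A P : ℤ → X →L[ℝ] X) : Prop :=
  ∃ K α : ℝ, 0 < K ∧ 0 < α ∧
    (∀ n ∈ J, (P n).comp (P n) = P n) ∧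
    (∀ n ∈ J', (A n).comp (P n) = (P (n + 1)).comp (A n)) ∧
    (∀ n ∈ J', Set.BijOn (A n) {x : X | P n x = 0} {x : X | P (n + 1) x = 0}) ∧
    (∀ m n : ℤ, m ∈ J → n ∈ J → n ≤ m →
      ‖(Phi A m n).comp (P n)‖ ≤ K * Real.exp (-α * ((m : ℝ) - (n : ℝ)))) ∧
    (∀ m n : ℤ, m ∈ J → n ∈ J → m ≤ n → ∀ x y : X,
      P m x = 0 → Phi A n m x = y - P n y →
      ‖x‖ ≤ K * Real.exp (-α * ((n : ℝ) - (m : ℝ))) * ‖y‖)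

/-- The system `x(n+1) = A(n) x(n)`, `n ∈ J'`, admits an exponential dichotomy on `J`. -/
def ExpDichotomy (J J' : Set ℤ) (A : ℤ → X →L[ℝ] X) : Prop :=
  ∃ P : ℤ → X →L[ℝ] X, IsExpDichotomy J J' A P

/-- A subspace (given as a set) `S` of `X` is complemented: there is a closed subspace `Z`
of `X` with `X = S ⊕ Z`. -/
def IsComplementedSubspace (S : Set X) : Prop :=
  ∃ Z : Submodule ℝ X, IsClosed (Z : Set X) ∧
    (∀ v ∈ S, v ∈ Z → v = (0 : X)) ∧ ∀ v : X, ∃ s ∈ S, ∃ z ∈ Z, v = s + z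

/-- The subspace `S = {v : sup_{n ∈ ℤ⁺} ‖Φ(n,0) v‖ < ∞}` of initial conditions of bounded
forward solutions. -/
def Sset (A : ℤ → X →L[ℝ] X) : Set X :=
  {v : X | ∃ C : ℝ, ∀ n : ℤ, 0 ≤ n → ‖Phi A n 0 v‖ ≤ C}

/-- The subspace `U(m)` of all `v` for which there is a bounded sequence `(x(n))_{n ≤ m}`
with `x(m) = v` and `x(n) = A(n-1) x(n-1)` for `n ≤ m`. -/
def Uset (A : ℤ → X →L[ℝ] X) (m : ℤ) : Set X :=
  {v : X | ∃ x : ℤ → X, x m = v ∧ (∃ C : ℝ, ∀ n : ℤ, n ≤ m → ‖x n‖ ≤ C) ∧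
    ∀ n : ℤ, n ≤ m → x n = A (n - 1) (x (n - 1))}

variable {X1 : Type u} {X2 : Type u} [NormedAddCommGroup X1] [NormedSpace ℝ X1]
  [NormedAddCommGroup X2] [NormedSpace ℝ X2]

/-- The triangular system operator `(x1, x2) ↦ (A11(n) x1 + A12(n) x2, A22(n) x2)`. -/
def triangular (A11 : ℤ → X1 →L[ℝ] X1) (A12 : ℤ → X2 →L[ℝ] X1)
    (A22 : ℤ → X2 →L[ℝ] X2) (n : ℤ) : (X1 × X2) →L[ℝ] X1 × X2 :=
  (((A11 n).comp (fst ℝ X1 X2)) + ((A12 n).comp (snd ℝ X1 X2))).prod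
    ((A22 n).comp (snd ℝ X1 X2))

/-- The diagonal system operator `(x1, x2) ↦ (A11(n) x1, A22(n) x2)`. -/
def diagonal (A11 : ℤ → X1 →L[ℝ] X1) (A22 : ℤ → X2 →L[ℝ] X2) (n : ℤ) :
    (X1 × X2) →L[ℝ] X1 × X2 :=
  (A11 n).prodMap (A22 n)

section Aux

variable {X : Type u} [NormedAddCommGroup X] [NormedSpace ℝ X]
variable (A : ℤ → X →L[ℝ] X)

lemma Phi_self (n : ℤ) : Phi A n n = ContinuousLinearMap.id ℝ X := by
  simp [Phi, cocycleAux]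

@[simp] lemma Phi_self_apply (n : ℤ) (v : X) : Phi A n n v = v := by
  rw [Phi_self]; rfl

lemma Phi_succ {m n : ℤ} (h : n ≤ m) : Phi A (m + 1) n = (A m).comp (Phi A m n) := by
  unfold Phi
  have h1 : (m + 1 - n).toNat = (m - n).toNat + 1 := by omega
  rw [h1]
  show (A (n + (m - n).toNat)).comp (cocycleAux A n (m - n).toNat) = _
  have h2 : (n : ℤ) + (m - n).toNat = m := by omega
  rw [h2]

lemma Phi_apply_succ {m n : ℤ} (h : n ≤ m) (v : X) :
    Phi A (m + 1) n v = A m (Phi A m n v) := by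
  rw [Phi_succ A h]; rfl

/-- If `x` satisfies the recurrence between `n` and `m`, then `x m = Φ(m,n) (x n)`. -/
lemma eq_Phi_of_rec {x : ℤ → X} {n : ℤ} :
    ∀ m : ℤ, n ≤ m → (∀ k : ℤ, n ≤ k → k < m → x (k + 1) = A k (x k)) →
      x m = Phi A m n (x n) := by
  refine Int.le_induction ?_ ?_
  · intro _; simp
  · intro m hm ih hx
    have h1 : x (m + 1) = A m (x m) := hx m hm (by omega)
    rw [h1, ih (fun k hk hk' => hx k hk (by omega)), Phi_apply_succ A hm]

lemma Phi_comp {i j : ℤ} (hij : i ≤ j) (v : X) :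
    ∀ k : ℤ, j ≤ k → Phi A k j (Phi A j i v) = Phi A k i v := by
  refine Int.le_induction ?_ ?_
  · simp
  · intro k hk ih
    rw [Phi_apply_succ A hk, Phi_apply_succ A (hij.trans hk), ih]

end Aux
section Aux2

variable {X : Type u} [NormedAddCommGroup X] [NormedSpace ℝ X]
variable (A : ℤ → X →L[ℝ] X)

lemma Uset_zero (m : ℤ) : (0 : X) ∈ Uset A m :=
  ⟨fun _ => 0, rfl, ⟨0, fun n _ => by simp⟩, fun n _ => by simp⟩

lemma Uset_add {m : ℤ} {u v : X} (hu : u ∈ Uset A m) (hv : v ∈ Uset A m) :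
    u + v ∈ Uset A m := by
  obtain ⟨x, hx0, ⟨C, hC⟩, hrec⟩ := hu
  obtain ⟨x', hx0', ⟨C', hC'⟩, hrec'⟩ := hv
  refine ⟨fun n => x n + x' n, by dsimp only; rw [hx0, hx0'], ⟨C + C', fun n hn => ?_⟩,
    fun n hn => ?_⟩
  · exact (norm_add_le _ _).trans (add_le_add (hC n hn) (hC' n hn))
  · dsimp only; rw [hrec n hn, hrec' n hn]; simp

lemma Uset_smul {m : ℤ} {v : X} (c : ℝ) (hv : v ∈ Uset A m) : c • v ∈ Uset A m := by
  obtain ⟨x, hx0, ⟨C, hC⟩, hrec⟩ := hv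
  refine ⟨fun n => c • x n, by dsimp only; rw [hx0], ⟨|c| * C, fun n hn => ?_⟩,
    fun n hn => ?_⟩
  · rw [norm_smul, Real.norm_eq_abs]
    exact mul_le_mul_of_nonneg_left (hC n hn) (abs_nonneg c)
  · dsimp only; rw [hrec n hn]; simp

lemma Uset_neg {m : ℤ} {v : X} (hv : v ∈ Uset A m) : -v ∈ Uset A m := by
  simpa using Uset_smul A (-1 : ℝ) hv

lemma Uset_sub {m : ℤ} {u v : X} (hu : u ∈ Uset A m) (hv : v ∈ Uset A m) :
    u - v ∈ Uset A m := by
  simpa [sub_eq_add_neg] using Uset_add A hu (Uset_neg A hv)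

lemma Uset_step {m : ℤ} {v : X} (hv : v ∈ Uset A m) : A m v ∈ Uset A (m + 1) := by
  obtain ⟨x, hx0, ⟨C, hC⟩, hrec⟩ := hv
  classical
  refine ⟨fun n => if n = m + 1 then A m v else x n,
    by simp, ⟨max C ‖A m v‖, fun n hn => ?_⟩, fun n hn => ?_⟩
  · by_cases h : n = m + 1
    · simp [h]
    · simp only [if_neg h]
      exact le_max_of_le_left (hC n (by omega))
  · by_cases h : n = m + 1
    · have h1 : n - 1 = m := by omega
      simp [h, h1, hx0, if_neg (show m ≠ m + 1 by omega)]
    · have h1 : n - 1 ≠ m + 1 := by omega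
      simp only [if_neg h, if_neg h1]
      exact hrec n (by omega)

lemma Uset_Phi {m : ℤ} {v : X} (hv : v ∈ Uset A m) :
    ∀ k : ℤ, m ≤ k → Phi A k m v ∈ Uset A k := by
  refine Int.le_induction ?_ ?_
  · simpa using hv
  · intro k hk ih
    rw [Phi_apply_succ A hk]
    exact Uset_step A ih

/-- Complete solution extending a `Uset` witness forwards by the cocycle. -/
lemma Uset_completion {m : ℤ} {v : X} (hv : v ∈ Uset A m) :
    ∃ z : ℤ → X, z m = v ∧ (∀ j : ℤ, z j = A (j - 1) (z (j - 1))) ∧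
      (∃ C : ℝ, ∀ j : ℤ, j ≤ m → ‖z j‖ ≤ C) ∧ (∀ j : ℤ, m ≤ j → z j = Phi A j m v) := by
  obtain ⟨x, hx0, ⟨C, hC⟩, hrec⟩ := hv
  classical
  refine ⟨fun j => if j ≤ m then x j else Phi A j m v, by simp [hx0], fun j => ?_,
    ⟨C, fun j hj => by simp only [if_pos hj]; exact hC j hj⟩,
    fun j hj => ?_⟩
  · by_cases h : j ≤ m
    · simp only [if_pos h, if_pos (show j - 1 ≤ m by omega)]
      exact hrec j h
    · push_neg at h
      simp only [if_neg (not_le.2 h)]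
      by_cases h1 : j - 1 ≤ m
      · have hjm : j = m + 1 := by omega
        simp only [if_pos h1]
        subst hjm
        rw [Phi_apply_succ A le_rfl]
        simp only [Phi_self_apply, add_sub_cancel_right]
        rw [hx0]
      · simp only [if_neg h1]
        have h2 : j = (j - 1) + 1 := by omega
        rw [h2, Phi_apply_succ A (by omega)]
        have h3 : j - 1 + 1 - 1 = j - 1 := by omega
        rw [h3]
  · by_cases h : j ≤ m
    · have : j = m := le_antisymm h hj
      simp [this, hx0]
    · simp [if_neg h]

/-- Boundedness helper: a sequence vanishing for `n ≥ 1` and bounded below `m` is bounded. -/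
lemma exists_global_bound (x : ℤ → X) (m : ℤ) (C0 : ℝ)
    (h1 : ∀ n : ℤ, n < m → ‖x n‖ ≤ C0) (h2 : ∀ n : ℤ, 1 ≤ n → x n = 0) :
    ∃ C : ℝ, ∀ n : ℤ, ‖x n‖ ≤ C := by
  classical
  refine ⟨max (max C0 0) (((Finset.Icc m 0).sup fun n => ‖x n‖₊ : NNReal) : ℝ), fun n => ?_⟩
  by_cases hn1 : 1 ≤ n
  · simp [h2 n hn1]
  · by_cases hnm : n < m
    · exact le_max_of_le_left (le_max_of_le_left (h1 n hnm))
    · refine le_max_of_le_right ?_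
      have hmem : n ∈ Finset.Icc m 0 := Finset.mem_Icc.2 ⟨by omega, by omega⟩
      have := Finset.le_sup (f := fun n => ‖x n‖₊) hmem
      exact_mod_cast this

end Aux2
section Aux3

set_option linter.unusedSectionVars false

variable {X : Type u} [NormedAddCommGroup X] [NormedSpace ℝ X]
variable (A : ℤ → X →L[ℝ] X)

/-- The normalized solution property: `x` solves `x(n+1) = A(n) x(n) + y(n)` on `n ≤ -1`,
with `x 0 ∈ Z` and `x n = 0` for `n ≥ 1`. -/
def IsSolZ (Z : Submodule ℝ X) (y x : ℤ → X) : Prop :=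
  (∀ n : ℤ, n ≤ -1 → x (n + 1) = A n (x n) + y n) ∧ x 0 ∈ Z ∧ ∀ n : ℤ, 1 ≤ n → x n = 0

variable {A}

/-- Vanishing lemma: a `Uset` element mapped to `0` by the cocycle up to time `0` is `0`. -/
lemma Uset_vanish
    (huniq : ∀ x : ℤ → X, x 0 = 0 → (∃ C : ℝ, ∀ n : ℤ, n ≤ 0 → ‖x n‖ ≤ C) →
      (∀ n : ℤ, n ≤ 0 → x n = A (n - 1) (x (n - 1))) → ∀ n : ℤ, n ≤ 0 → x n = 0)
    {m : ℤ} (hm : m ≤ 0) {v : X} (hv : v ∈ Uset A m) (h0 : Phi A 0 m v = 0) : v = 0 := by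
  obtain ⟨z, hzm, hzrec, ⟨C, hC⟩, hzPhi⟩ := Uset_completion A hv
  have hz0 : z 0 = 0 := by rw [hzPhi 0 hm, h0]
  have hbdd : ∃ C' : ℝ, ∀ n : ℤ, n ≤ 0 → ‖z n‖ ≤ C' := by
    classical
    refine ⟨max C (((Finset.Icc m 0).sup fun n => ‖z n‖₊ : NNReal) : ℝ), fun n hn => ?_⟩
    by_cases hnm : n ≤ m
    · exact le_max_of_le_left (hC n hnm)
    · refine le_max_of_le_right ?_
      have hmem : n ∈ Finset.Icc m 0 := Finset.mem_Icc.2 ⟨by omega, hn⟩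
      exact_mod_cast Finset.le_sup (f := fun n => ‖z n‖₊) hmem
  have := huniq z hz0 hbdd (fun n _ => hzrec n) m hm
  rw [← hzm, this]

/-- Uniqueness of normalized bounded solutions. -/
lemma solZ_unique {Z : Submodule ℝ X}
    (hZU : ∀ v ∈ Uset A 0, v ∈ (Z : Set X) → v = 0)
    (huniq : ∀ x : ℤ → X, x 0 = 0 → (∃ C : ℝ, ∀ n : ℤ, n ≤ 0 → ‖x n‖ ≤ C) →
      (∀ n : ℤ, n ≤ 0 → x n = A (n - 1) (x (n - 1))) → ∀ n : ℤ, n ≤ 0 → x n = 0)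
    {y x x' : ℤ → X} (hx : IsSolZ A Z y x) (hx' : IsSolZ A Z y x')
    (hb : ∃ C : ℝ, ∀ n : ℤ, ‖x n‖ ≤ C) (hb' : ∃ C : ℝ, ∀ n : ℤ, ‖x' n‖ ≤ C) : x = x' := by
  obtain ⟨heq, hZ, h1⟩ := hx
  obtain ⟨heq', hZ', h1'⟩ := hx'
  set d : ℤ → X := fun n => x n - x' n with hd
  have hdrec : ∀ n : ℤ, n ≤ 0 → d n = A (n - 1) (d (n - 1)) := by
    intro n hn
    have e1 := heq (n - 1) (by omega)
    have e2 := heq' (n - 1) (by omega)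
    have h3 : n - 1 + 1 = n := by omega
    rw [h3] at e1 e2
    simp only [hd, e1, e2, map_sub]
    abel
  have hdbdd : ∃ C : ℝ, ∀ n : ℤ, n ≤ 0 → ‖d n‖ ≤ C := by
    obtain ⟨C, hC⟩ := hb; obtain ⟨C', hC'⟩ := hb'
    exact ⟨C + C', fun n _ => (norm_sub_le _ _).trans (add_le_add (hC n) (hC' n))⟩
  have hdU : d 0 ∈ Uset A 0 := ⟨d, rfl, hdbdd, hdrec⟩
  have hdZ : d 0 ∈ (Z : Set X) := Z.sub_mem hZ hZ'
  have hd0 : d 0 = 0 := hZU _ hdU hdZ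
  have hall := huniq d hd0 hdbdd hdrec
  funext n
  by_cases hn : n ≤ 0
  · have := hall n hn
    simpa [hd, sub_eq_zero] using this
  · rw [h1 n (by omega), h1' n (by omega)]

/-- Existence of normalized bounded solutions. -/
lemma solZ_exists {Z : Submodule ℝ X}
    (hadm : ∀ y : ℤ → X, (∃ C : ℝ, ∀ n : ℤ, n ≤ -1 → ‖y n‖ ≤ C) →
      ∃ x : ℤ → X, (∃ C : ℝ, ∀ n : ℤ, n ≤ 0 → ‖x n‖ ≤ C) ∧
        ∀ n : ℤ, n ≤ -1 → x (n + 1) = A n (x n) + y n)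
    (hdecomp : ∀ v : X, ∃ s ∈ Uset A 0, ∃ z ∈ (Z : Set X), v = s + z)
    (y : ℤ → X) (hy : ∃ C : ℝ, ∀ n : ℤ, n ≤ -1 → ‖y n‖ ≤ C) :
    ∃ x : ℤ → X, (∃ C : ℝ, ∀ n : ℤ, ‖x n‖ ≤ C) ∧ IsSolZ A Z y x := by
  classical
  obtain ⟨x0, ⟨C0, hC0⟩, heq0⟩ := hadm y hy
  obtain ⟨s, hs, z, hz, hsz⟩ := hdecomp (x0 0)
  obtain ⟨w, hw0, ⟨Cw, hCw⟩, hwrec⟩ := hs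
  refine ⟨fun n => if 1 ≤ n then 0 else x0 n - w n, ⟨max (C0 + Cw) 0, fun n => ?_⟩,
    fun n hn => ?_, ?_, fun n hn => by simp [if_pos hn]⟩
  · by_cases hn : 1 ≤ n
    · simp [if_pos hn]
    · simp only [if_neg hn]
      exact le_max_of_le_left ((norm_sub_le _ _).trans
        (add_le_add (hC0 n (by omega)) (hCw n (by omega))))
  · have h1 : ¬ (1 ≤ n + 1) := by omega
    have h2 : ¬ (1 ≤ n) := by omega
    simp only [if_neg h1, if_neg h2]
    have e1 := heq0 n hn
    have e2 := hwrec (n + 1) (by omega)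
    have h3 : n + 1 - 1 = n := by omega
    rw [h3] at e2
    rw [e1, e2]
    simp only [map_sub]
    abel
  · simp only [if_neg (show ¬ (1 ≤ (0:ℤ)) by omega)]
    have : x0 0 - w 0 = z := by rw [hw0, hsz]; abel
    rw [this]; exact hz

end Aux3
section Aux4

set_option linter.unusedSectionVars false
set_option maxHeartbeats 1000000

open BoundedContinuousFunction

variable {X : Type u} [NormedAddCommGroup X] [NormedSpace ℝ X] [CompleteSpace X]
variable {A : ℤ → X →L[ℝ] X}

/-- Main functional-analytic input: a uniform bound on normalized solutions. -/
lemma exists_solZ_bound {Z : Submodule ℝ X} (hZclosed : IsClosed (Z : Set X))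
    (hadm : ∀ y : ℤ → X, (∃ C : ℝ, ∀ n : ℤ, n ≤ -1 → ‖y n‖ ≤ C) →
      ∃ x : ℤ → X, (∃ C : ℝ, ∀ n : ℤ, n ≤ 0 → ‖x n‖ ≤ C) ∧
        ∀ n : ℤ, n ≤ -1 → x (n + 1) = A n (x n) + y n)
    (hdecomp : ∀ v : X, ∃ s ∈ Uset A 0, ∃ z ∈ (Z : Set X), v = s + z)
    (hZU : ∀ v ∈ Uset A 0, v ∈ (Z : Set X) → v = 0)
    (huniq : ∀ x : ℤ → X, x 0 = 0 → (∃ C : ℝ, ∀ n : ℤ, n ≤ 0 → ‖x n‖ ≤ C) →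
      (∀ n : ℤ, n ≤ 0 → x n = A (n - 1) (x (n - 1))) → ∀ n : ℤ, n ≤ 0 → x n = 0) :
    ∃ D : ℝ, 2 ≤ D ∧ ∀ (y x : ℤ → X) (c : ℝ), (∀ n : ℤ, ‖y n‖ ≤ c) →
      (∃ C : ℝ, ∀ n : ℤ, ‖x n‖ ≤ C) → IsSolZ A Z y x → ∀ n : ℤ, ‖x n‖ ≤ D * c := by
  classical
  -- the solution map on bounded sequences
  have hex : ∀ y : ℤ →ᵇ X, ∃ x : ℤ →ᵇ X, IsSolZ A Z ⇑y ⇑x := by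
    intro y
    obtain ⟨x, ⟨C, hC⟩, hsol⟩ := solZ_exists hadm hdecomp ⇑y
      ⟨‖y‖, fun n _ => y.norm_coe_le_norm n⟩
    exact ⟨ofNormedAddCommGroup x continuous_of_discreteTopology C hC, hsol⟩
  choose Lf hLf using hex
  have bdd : ∀ x : ℤ →ᵇ X, ∃ C : ℝ, ∀ n : ℤ, ‖x n‖ ≤ C :=
    fun x => ⟨‖x‖, fun n => x.norm_coe_le_norm n⟩
  have huniq' : ∀ (y : ℤ → X) (x x' : ℤ →ᵇ X), IsSolZ A Z y ⇑x → IsSolZ A Z y ⇑x' → x = x' :=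
    fun y x x' h h' => BoundedContinuousFunction.ext fun n =>
      congrFun (solZ_unique hZU huniq h h' (bdd x) (bdd x')) n
  have hadd : ∀ y y' : ℤ →ᵇ X, Lf (y + y') = Lf y + Lf y' := by
    intro y y'
    refine huniq' ⇑(y + y') _ _ (hLf _) ?_
    obtain ⟨h1, h2, h3⟩ := hLf y
    obtain ⟨h1', h2', h3'⟩ := hLf y'
    refine ⟨fun n hn => ?_, ?_, fun n hn => ?_⟩
    · show Lf y (n+1) + Lf y' (n+1) = A n (Lf y n + Lf y' n) + (y n + y' n)
      rw [h1 n hn, h1' n hn, map_add]; abel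
    · exact Z.add_mem h2 h2'
    · show Lf y n + Lf y' n = 0
      rw [h3 n hn, h3' n hn, add_zero]
  have hsmul : ∀ (c : ℝ) (y : ℤ →ᵇ X), Lf (c • y) = c • Lf y := by
    intro c y
    refine huniq' ⇑(c • y) _ _ (hLf _) ?_
    obtain ⟨h1, h2, h3⟩ := hLf y
    refine ⟨fun n hn => ?_, ?_, fun n hn => ?_⟩
    · show c • Lf y (n+1) = A n (c • Lf y n) + c • y n
      rw [h1 n hn, map_smul, smul_add]
    · exact Z.smul_mem c h2
    · show c • Lf y n = 0
      rw [h3 n hn, smul_zero]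
  let L : (ℤ →ᵇ X) →ₗ[ℝ] (ℤ →ᵇ X) :=
    { toFun := Lf, map_add' := hadd, map_smul' := hsmul }
  have hgraph : (L.graph : Set ((ℤ →ᵇ X) × (ℤ →ᵇ X))) =
      {p : (ℤ →ᵇ X) × (ℤ →ᵇ X) | IsSolZ A Z ⇑p.1 ⇑p.2} := by
    ext p
    simp only [SetLike.mem_coe, LinearMap.mem_graph_iff, Set.mem_setOf_eq]
    constructor
    · intro h; rw [h]; exact hLf p.1
    · intro h
      exact (huniq' ⇑p.1 p.2 (Lf p.1) h (hLf p.1)).symm ▸ rfl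
  have hclosed : IsClosed (L.graph : Set ((ℤ →ᵇ X) × (ℤ →ᵇ X))) := by
    rw [hgraph]
    have hev : ∀ k : ℤ, Continuous fun f : ℤ →ᵇ X => f k :=
      fun k => continuous_eval_const k
    have h1 : IsClosed {p : (ℤ →ᵇ X) × (ℤ →ᵇ X) |
        ∀ n : ℤ, n ≤ -1 → p.2 (n + 1) = A n (p.2 n) + p.1 n} := by
      have : {p : (ℤ →ᵇ X) × (ℤ →ᵇ X) | ∀ n : ℤ, n ≤ -1 →
          p.2 (n + 1) = A n (p.2 n) + p.1 n} =
          ⋂ n : ℤ, {p : (ℤ →ᵇ X) × (ℤ →ᵇ X) | n ≤ -1 →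
          p.2 (n + 1) = A n (p.2 n) + p.1 n} := by
        ext p; simp
      rw [this]
      refine isClosed_iInter fun n => ?_
      by_cases hn : n ≤ -1
      · simp only [hn, forall_true_left]
        exact isClosed_eq
          ((hev (n + 1)).comp continuous_snd)
          ((((A n).continuous.comp ((hev n).comp continuous_snd))).add
            ((hev n).comp continuous_fst))
      · simp only [hn, false_implies]
        exact isClosed_univ.mono (by simp [Set.setOf_true])
    have h2 : IsClosed {p : (ℤ →ᵇ X) × (ℤ →ᵇ X) | p.2 0 ∈ (Z : Set X)} :=
      hZclosed.preimage ((hev 0).comp continuous_snd)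
    have h3 : IsClosed {p : (ℤ →ᵇ X) × (ℤ →ᵇ X) | ∀ n : ℤ, 1 ≤ n → p.2 n = 0} := by
      have : {p : (ℤ →ᵇ X) × (ℤ →ᵇ X) | ∀ n : ℤ, 1 ≤ n → p.2 n = 0} =
          ⋂ n : ℤ, {p : (ℤ →ᵇ X) × (ℤ →ᵇ X) | 1 ≤ n → p.2 n = 0} := by
        ext p; simp
      rw [this]
      refine isClosed_iInter fun n => ?_
      by_cases hn : (1:ℤ) ≤ n
      · simp only [hn, forall_true_left]
        exact isClosed_eq ((hev n).comp continuous_snd) continuous_const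
      · simp only [hn, false_implies]
        exact isClosed_univ.mono (by simp [Set.setOf_true])
    have : {p : (ℤ →ᵇ X) × (ℤ →ᵇ X) | IsSolZ A Z ⇑p.1 ⇑p.2} =
        {p : (ℤ →ᵇ X) × (ℤ →ᵇ X) | ∀ n : ℤ, n ≤ -1 → p.2 (n + 1) = A n (p.2 n) + p.1 n} ∩
        ({p : (ℤ →ᵇ X) × (ℤ →ᵇ X) | p.2 0 ∈ (Z : Set X)} ∩
         {p : (ℤ →ᵇ X) × (ℤ →ᵇ X) | ∀ n : ℤ, 1 ≤ n → p.2 n = 0}) := by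
      ext p; exact ⟨fun ⟨a, b, c⟩ => ⟨a, b, c⟩, fun ⟨a, b, c⟩ => ⟨a, b, c⟩⟩
    rw [this]
    exact h1.inter (h2.inter h3)
  have hcont : Continuous L := L.continuous_of_isClosed_graph hclosed
  let Lc : (ℤ →ᵇ X) →L[ℝ] (ℤ →ᵇ X) := ⟨L, hcont⟩
  refine ⟨max ‖Lc‖ 2, le_max_right _ _, fun y x c hy hxb hsol n => ?_⟩
  have hc0 : 0 ≤ c := (norm_nonneg (y 0)).trans (hy 0)
  let yb : ℤ →ᵇ X := ofNormedAddCommGroup y continuous_of_discreteTopology c hy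
  have hyb : ‖yb‖ ≤ c := by
    refine (norm_le hc0).2 fun n => ?_
    exact hy n
  have hxeq : x = ⇑(Lf yb) := solZ_unique hZU huniq hsol (hLf yb) hxb (bdd _)
  have h1 : ‖x n‖ ≤ ‖Lf yb‖ := by rw [hxeq]; exact (Lf yb).norm_coe_le_norm n
  have h2 : ‖Lf yb‖ ≤ ‖Lc‖ * ‖yb‖ := Lc.le_opNorm yb
  calc ‖x n‖ ≤ ‖Lc‖ * ‖yb‖ := h1.trans h2
    _ ≤ ‖Lc‖ * c := by
        exact mul_le_mul_of_nonneg_left hyb (norm_nonneg _)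
    _ ≤ max ‖Lc‖ 2 * c := mul_le_mul_of_nonneg_right (le_max_left _ _) hc0

end Aux4
section Aux5

set_option linter.unusedSectionVars false

variable {X : Type u} [NormedAddCommGroup X] [NormedSpace ℝ X]
variable {A : ℤ → X →L[ℝ] X}

/-- Existence of a bounded decomposition at every time `t ≤ 0`. -/
lemma decomp_exists {Z : Submodule ℝ X} {D : ℝ}
    (hadm : ∀ y : ℤ → X, (∃ C : ℝ, ∀ n : ℤ, n ≤ -1 → ‖y n‖ ≤ C) →
      ∃ x : ℤ → X, (∃ C : ℝ, ∀ n : ℤ, n ≤ 0 → ‖x n‖ ≤ C) ∧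
        ∀ n : ℤ, n ≤ -1 → x (n + 1) = A n (x n) + y n)
    (hdecomp : ∀ v : X, ∃ s ∈ Uset A 0, ∃ z ∈ (Z : Set X), v = s + z)
    (HD : ∀ (y x : ℤ → X) (c : ℝ), (∀ n : ℤ, ‖y n‖ ≤ c) →
      (∃ C : ℝ, ∀ n : ℤ, ‖x n‖ ≤ C) → IsSolZ A Z y x → ∀ n : ℤ, ‖x n‖ ≤ D * c)
    {t : ℤ} (ht : t ≤ 0) (v : X) :
    ∃ e : X, Phi A 0 t e ∈ (Z : Set X) ∧ v - e ∈ Uset A t ∧ ‖e‖ ≤ D * ‖v‖ := by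
  classical
  set y : ℤ → X := fun n => if n = t - 1 then v else 0 with hy
  have hyb : ∀ n : ℤ, ‖y n‖ ≤ ‖v‖ := by
    intro n; by_cases h : n = t - 1 <;> simp [hy, h]
  obtain ⟨x, hxb, hsol⟩ := solZ_exists hadm hdecomp y ⟨‖v‖, fun n _ => hyb n⟩
  obtain ⟨heq, hZ0, h1⟩ := hsol
  have hbound := HD y x ‖v‖ hyb hxb ⟨heq, hZ0, h1⟩
  refine ⟨x t, ?_, ?_, hbound t⟩
  · -- Phi A 0 t (x t) = x 0 ∈ Z
    have : x 0 = Phi A 0 t (x t) := by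
      refine eq_Phi_of_rec A 0 ht fun k hk hk' => ?_
      have := heq k (by omega)
      rw [this, hy]
      simp [show k ≠ t - 1 by omega]
    rw [← this]; exact hZ0
  · -- v - x t ∈ Uset A t
    have hstep : x t = A (t - 1) (x (t - 1)) + v := by
      have := heq (t - 1) (by omega)
      have h2 : t - 1 + 1 = t := by omega
      rw [h2] at this
      rw [this, hy]; simp
    have hxt1 : x (t - 1) ∈ Uset A (t - 1) := by
      obtain ⟨C, hC⟩ := hxb
      refine ⟨x, rfl, ⟨C, fun n _ => hC n⟩, fun n hn => ?_⟩
      have := heq (n - 1) (by omega)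
      have h2 : n - 1 + 1 = n := by omega
      rw [h2] at this
      rw [this, hy]
      simp [show n - 1 ≠ t - 1 by omega]
    have : v - x t = -(A (t - 1) (x (t - 1))) := by rw [hstep]; abel
    rw [this]
    have := Uset_step A hxt1
    have h2 : t - 1 + 1 = t := by omega
    rw [h2] at this
    exact Uset_neg A this

/-- Uniqueness of the decomposition. -/
lemma decomp_unique {Z : Submodule ℝ X}
    (hZU : ∀ v ∈ Uset A 0, v ∈ (Z : Set X) → v = 0)
    (huniq : ∀ x : ℤ → X, x 0 = 0 → (∃ C : ℝ, ∀ n : ℤ, n ≤ 0 → ‖x n‖ ≤ C) →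
      (∀ n : ℤ, n ≤ 0 → x n = A (n - 1) (x (n - 1))) → ∀ n : ℤ, n ≤ 0 → x n = 0)
    {t : ℤ} (ht : t ≤ 0) {v : X} (hvZ : Phi A 0 t v ∈ (Z : Set X)) (hvU : v ∈ Uset A t) :
    v = 0 := by
  have h1 : Phi A 0 t v ∈ Uset A 0 := Uset_Phi A hvU 0 ht
  have h2 : Phi A 0 t v = 0 := hZU _ h1 hvZ
  exact Uset_vanish huniq ht hvU h2

end Aux5
section Aux6

set_option linter.unusedSectionVars false
set_option maxHeartbeats 1000000

variable {X : Type u} [NormedAddCommGroup X] [NormedSpace ℝ X]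
variable {A : ℤ → X →L[ℝ] X}

lemma sum_Icc_top {m i : ℤ} (h : m ≤ i + 1) (f : ℤ → ℝ) :
    ∑ j ∈ Finset.Icc m (i + 1), f j = (∑ j ∈ Finset.Icc m i, f j) + f (i + 1) := by
  have hni : i + 1 ∉ Finset.Icc m i := by simp [Finset.mem_Icc]
  have : Finset.Icc m (i + 1) = insert (i + 1) (Finset.Icc m i) := by
    ext j; simp only [Finset.mem_Icc, Finset.mem_insert]; omega
  rw [this, Finset.sum_insert hni]; ring

lemma sum_Icc_bot {m n : ℤ} (h : m ≤ n) (f : ℤ → ℝ) :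
    ∑ j ∈ Finset.Icc m n, f j = f m + ∑ j ∈ Finset.Icc (m + 1) n, f j := by
  have hni : m ∉ Finset.Icc (m + 1) n := by simp [Finset.mem_Icc]
  have : Finset.Icc m n = insert m (Finset.Icc (m + 1) n) := by
    ext j; simp only [Finset.mem_Icc, Finset.mem_insert]; omega
  rw [this, Finset.sum_insert hni]

/-- The stable estimate: exponential contraction of the cocycle on `E(m)`. -/
lemma stable_estimate {Z : Submodule ℝ X} {D : ℝ} (hD : 2 ≤ D)
    (HD : ∀ (y x : ℤ → X) (c : ℝ), (∀ n : ℤ, ‖y n‖ ≤ c) →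
      (∃ C : ℝ, ∀ n : ℤ, ‖x n‖ ≤ C) → IsSolZ A Z y x → ∀ n : ℤ, ‖x n‖ ≤ D * c)
    {m k : ℤ} (hmk : m ≤ k) (hk : k ≤ 0) {v : X} (hv : Phi A 0 m v ∈ (Z : Set X)) :
    ‖Phi A k m v‖ ≤ D * ((D - 1) / D) ^ (k - m).toNat * ‖v‖ := by
  classical
  have hD0 : (0:ℝ) < D := by linarith
  have hlam0 : (0:ℝ) ≤ (D - 1) / D := div_nonneg (by linarith) (by linarith)
  have hrhs0 : (0:ℝ) ≤ D * ((D - 1) / D) ^ (k - m).toNat * ‖v‖ := by positivity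
  by_cases hv0 : v = 0
  · subst hv0; simp
  by_cases hzero : ∃ j : ℤ, m ≤ j ∧ j ≤ k ∧ Phi A j m v = 0
  · obtain ⟨j, hj1, hj2, hj3⟩ := hzero
    have := Phi_comp A hj1 v k hj2
    rw [← this, hj3, map_zero, norm_zero]
    exact hrhs0
  push_neg at hzero
  set a : ℤ → ℝ := fun j => ‖Phi A j m v‖ with ha
  have hapos : ∀ j : ℤ, m ≤ j → j ≤ k → 0 < a j := fun j h1 h2 =>
    norm_pos_iff.2 (hzero j h1 h2)
  set S : ℤ → ℝ := fun i => ∑ j ∈ Finset.Icc m i, (a j)⁻¹ with hS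
  have hSpos : ∀ i : ℤ, m ≤ i → i ≤ k → 0 < S i := by
    intro i h1 h2
    refine Finset.sum_pos (fun j hj => ?_) ⟨m, Finset.mem_Icc.2 ⟨le_rfl, h1⟩⟩
    rw [Finset.mem_Icc] at hj
    exact inv_pos.2 (hapos j hj.1 (hj.2.trans h2))
  set xt : ℤ → X := fun i => if i < m then 0 else if i ≤ k then S i • Phi A i m v
    else if i ≤ 0 then S k • Phi A i m v else 0 with hxt
  set yt : ℤ → X := fun n => if n ≤ -1 then xt (n + 1) - A n (xt n) else 0 with hyt
  have hsol : IsSolZ A Z yt xt := by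
    refine ⟨fun n hn => ?_, ?_, fun n hn => ?_⟩
    · simp only [hyt, if_pos hn]; abel
    · have h0m : ¬ ((0:ℤ) < m) := by omega
      by_cases h0k : (0:ℤ) ≤ k
      · have hk0 : k = 0 := le_antisymm hk h0k
        simp only [hxt, if_neg h0m, if_pos h0k]
        exact Z.smul_mem _ hv
      · simp only [hxt, if_neg h0m, if_neg h0k, if_pos (le_refl (0:ℤ))]
        exact Z.smul_mem _ hv
    · simp only [hxt, if_neg (show ¬ (n < m) by omega), if_neg (show ¬ (n ≤ k) by omega),
        if_neg (show ¬ (n ≤ 0) by omega)]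
  have hxtb : ∃ C : ℝ, ∀ n : ℤ, ‖xt n‖ ≤ C := by
    refine exists_global_bound xt m 0 (fun n hn => ?_) hsol.2.2
    simp [hxt, if_pos hn]
  have hyb : ∀ n : ℤ, ‖yt n‖ ≤ 1 := by
    intro n
    by_cases hn : n ≤ -1
    swap
    · simp [hyt, if_neg hn]
    simp only [hyt, if_pos hn]
    by_cases c1 : n + 1 < m
    · simp [hxt, if_pos c1, if_pos (show n < m by omega)]
    by_cases c2 : n + 1 = m
    · have hnm : n < m := by omega
      have hxn : xt n = 0 := by simp [hxt, if_pos hnm]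
      have hSm : S m = (a m)⁻¹ := by simp [hS, Finset.Icc_self]
      have hxn1 : xt (n + 1) = (a m)⁻¹ • v := by
        rw [c2] at *
        simp [hxt, if_neg (lt_irrefl m), if_pos hmk, hSm]
      rw [hxn, hxn1, map_zero, sub_zero, norm_smul, Real.norm_eq_abs]
      have ham : a m = ‖v‖ := by simp [ha]
      rw [abs_of_pos (inv_pos.2 (hapos m le_rfl hmk)), ham]
      rw [ham] at *
      exact le_of_eq (inv_mul_cancel₀ (norm_pos_iff.2 hv0).ne')
    by_cases c3 : n + 1 ≤ k
    · have hmn : m ≤ n := by omega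
      have hxn : xt n = S n • Phi A n m v := by
        simp [hxt, if_neg (show ¬ (n < m) by omega), if_pos (show n ≤ k by omega)]
      have hxn1 : xt (n + 1) = S (n + 1) • Phi A (n + 1) m v := by
        simp only [hxt, if_neg (show ¬ (n + 1 < m) by omega), if_pos c3]
      have hstep : A n (Phi A n m v) = Phi A (n + 1) m v := (Phi_apply_succ A hmn v).symm
      rw [hxn, hxn1, map_smul, hstep, ← sub_smul, norm_smul, Real.norm_eq_abs]
      have hsplit : S (n + 1) - S n = (a (n + 1))⁻¹ := by
        rw [hS]; dsimp only; rw [sum_Icc_top (by omega) _]; ring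
      rw [hsplit, abs_of_pos (inv_pos.2 (hapos (n+1) (by omega) c3))]
      exact le_of_eq (inv_mul_cancel₀ (hapos (n+1) (by omega) c3).ne')
    · -- k ≤ n
      have hmn : m ≤ n := by omega
      have hkn : k ≤ n := by omega
      have hxn : xt n = S k • Phi A n m v := by
        by_cases h : n ≤ k
        · have hnk : n = k := le_antisymm h hkn
          subst hnk
          simp [hxt, if_neg (show ¬ (n < m) by omega), if_pos h]
        · simp [hxt, if_neg (show ¬ (n < m) by omega), if_neg h,
            if_pos (show n ≤ 0 by omega)]
      have hxn1 : xt (n + 1) = S k • Phi A (n + 1) m v := by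
        simp only [hxt, if_neg (show ¬ (n + 1 < m) by omega), if_neg (show ¬ (n + 1 ≤ k) by omega),
          if_pos (show n + 1 ≤ 0 by omega)]
      have hstep : A n (Phi A n m v) = Phi A (n + 1) m v := (Phi_apply_succ A hmn v).symm
      rw [hxn, hxn1, map_smul, hstep, sub_self, norm_zero]
      exact zero_le_one
  have hbd := HD yt xt 1 hyb hxtb hsol
  have hSa : ∀ i : ℤ, m ≤ i → i ≤ k → a i * S i ≤ D := by
    intro i h1 h2
    have := hbd i
    rw [mul_one] at this
    have hxi : xt i = S i • Phi A i m v := by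
      simp [hxt, if_neg (show ¬ (i < m) by omega), if_pos h2]
    rw [hxi, norm_smul, Real.norm_eq_abs, abs_of_pos (hSpos i h1 h2)] at this
    linarith [this]
  have hkey : ∀ i : ℤ, m ≤ i → i ≤ k → S m ≤ ((D - 1) / D) ^ (i - m).toNat * S i := by
    refine Int.le_induction ?_ ?_
    · intro _; simp
    · intro i hi ih h
      have hik : i ≤ k := by omega
      have h1 : a (i + 1) * S (i + 1) ≤ D := hSa (i + 1) (by omega) h
      have hS1 : 0 < S (i + 1) := hSpos _ (by omega) h
      have ha1 : 0 < a (i + 1) := hapos _ (by omega) h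
      have hsplit : S (i + 1) = S i + (a (i + 1))⁻¹ := by
        rw [hS]; dsimp only; rw [sum_Icc_top (by omega) _]
      have hinv : S (i + 1) / D ≤ (a (i + 1))⁻¹ := by
        rw [div_le_iff₀ hD0, inv_mul_eq_div, le_div_iff₀ ha1]
        linarith [h1]
      have hSi : S i ≤ (D - 1) / D * S (i + 1) := by
        have hid : (D - 1) / D * S (i + 1) = S (i + 1) - S (i + 1) / D := by
          field_simp
        rw [hid]
        linarith [hinv, hsplit]
      have htn : (i + 1 - m).toNat = (i - m).toNat + 1 := by omega
      calc S m ≤ ((D - 1) / D) ^ (i - m).toNat * S i := ih hik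
        _ ≤ ((D - 1) / D) ^ (i - m).toNat * ((D - 1) / D * S (i + 1)) :=
            mul_le_mul_of_nonneg_left hSi (pow_nonneg hlam0 _)
        _ = ((D - 1) / D) ^ (i + 1 - m).toNat * S (i + 1) := by rw [htn, pow_succ]; ring
  have h1 : a k * S k ≤ D := hSa k hmk le_rfl
  have h2 : S m ≤ ((D - 1) / D) ^ (k - m).toNat * S k := hkey k hmk le_rfl
  have hSm : S m = ‖v‖⁻¹ := by
    have : a m = ‖v‖ := by simp [ha]
    simp [hS, Finset.Icc_self, this]
  have hvpos : (0:ℝ) < ‖v‖ := norm_pos_iff.2 hv0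
  have e1 : 1 ≤ ‖v‖ * (((D - 1) / D) ^ (k - m).toNat * S k) := by
    calc (1:ℝ) = ‖v‖ * ‖v‖⁻¹ := (mul_inv_cancel₀ hvpos.ne').symm
      _ ≤ ‖v‖ * (((D - 1) / D) ^ (k - m).toNat * S k) :=
          mul_le_mul_of_nonneg_left (hSm ▸ h2) hvpos.le
  calc ‖Phi A k m v‖ = a k * 1 := by rw [mul_one]
    _ ≤ a k * (‖v‖ * (((D - 1) / D) ^ (k - m).toNat * S k)) :=
        mul_le_mul_of_nonneg_left e1 (norm_nonneg _)
    _ = (a k * S k) * (((D - 1) / D) ^ (k - m).toNat * ‖v‖) := by ring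
    _ ≤ D * (((D - 1) / D) ^ (k - m).toNat * ‖v‖) :=
        mul_le_mul_of_nonneg_right h1 (by positivity)
    _ = D * ((D - 1) / D) ^ (k - m).toNat * ‖v‖ := by ring

end Aux6
section Aux7

set_option linter.unusedSectionVars false
set_option maxHeartbeats 1000000

variable {X : Type u} [NormedAddCommGroup X] [NormedSpace ℝ X]
variable {A : ℤ → X →L[ℝ] X}

/-- The unstable estimate: exponential backward contraction on `Uset`. -/
lemma unstable_estimate {Z : Submodule ℝ X} {D : ℝ} (hD : 2 ≤ D)
    (HD : ∀ (y x : ℤ → X) (c : ℝ), (∀ n : ℤ, ‖y n‖ ≤ c) →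
      (∃ C : ℝ, ∀ n : ℤ, ‖x n‖ ≤ C) → IsSolZ A Z y x → ∀ n : ℤ, ‖x n‖ ≤ D * c)
    (huniq : ∀ x : ℤ → X, x 0 = 0 → (∃ C : ℝ, ∀ n : ℤ, n ≤ 0 → ‖x n‖ ≤ C) →
      (∀ n : ℤ, n ≤ 0 → x n = A (n - 1) (x (n - 1))) → ∀ n : ℤ, n ≤ 0 → x n = 0)
    {m n : ℤ} (hmn : m ≤ n) (hn : n ≤ 0) {x : X} (hx : x ∈ Uset A m) :
    ‖x‖ ≤ 2 * D * (D / (D + 1)) ^ (n - m).toNat * ‖Phi A n m x‖ := by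
  classical
  have hD0 : (0:ℝ) < D := by linarith
  have hmu0 : (0:ℝ) < D / (D + 1) := by positivity
  have hm0 : m ≤ 0 := hmn.trans hn
  by_cases hw0 : Phi A n m x = 0
  · have h0 : Phi A 0 m x = 0 := by
      rw [← Phi_comp A hmn x 0 hn, hw0, map_zero]
    rw [Uset_vanish huniq hm0 hx h0]
    simp
  rcases eq_or_lt_of_le hmn with heq | hlt
  · subst heq
    simp only [Phi_self_apply]
    have h1 : (1:ℝ) ≤ 2 * D * (D / (D + 1)) ^ (m - m).toNat := by
      simp only [sub_self, Int.toNat_zero, pow_zero, mul_one]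
      linarith
    nlinarith [norm_nonneg x]
  -- now m < n
  have hzero : ∀ j : ℤ, m ≤ j → j ≤ n → Phi A j m x ≠ 0 := by
    intro j h1 h2 h3
    exact hw0 (by rw [← Phi_comp A h1 x n h2, h3, map_zero])
  set b : ℤ → ℝ := fun j => ‖Phi A j m x‖ with hb
  have hbpos : ∀ j : ℤ, m ≤ j → j ≤ n → 0 < b j := fun j h1 h2 =>
    norm_pos_iff.2 (hzero j h1 h2)
  set T : ℤ → ℝ := fun i => ∑ j ∈ Finset.Icc i n, (b j)⁻¹ with hT
  have hTpos : ∀ i : ℤ, m ≤ i → i ≤ n → 0 < T i := by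
    intro i h1 h2
    refine Finset.sum_pos (fun j hj => ?_) ⟨n, Finset.mem_Icc.2 ⟨h2, le_rfl⟩⟩
    rw [Finset.mem_Icc] at hj
    exact inv_pos.2 (hbpos j (h1.trans hj.1) hj.2)
  have hTn : T n = (b n)⁻¹ := by simp [hT, Finset.Icc_self]
  have hTsplit : ∀ i : ℤ, i ≤ n → T (i - 1) = (b (i - 1))⁻¹ + T i := by
    intro i hi
    rw [hT]; dsimp only
    rw [sum_Icc_bot (by omega) _]
    norm_num
  obtain ⟨z, hzm, hzrec, ⟨C, hC⟩, hzPhi⟩ := Uset_completion A hx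
  have hzstep : ∀ j : ℤ, A j (z j) = z (j + 1) := by
    intro j
    have := hzrec (j + 1)
    have h1 : j + 1 - 1 = j := by omega
    rw [h1] at this
    exact this.symm
  set xt : ℤ → X := fun i => if i ≤ m - 1 then -(T m • z i)
    else if i ≤ n - 1 then -(T (i + 1) • z i) else 0 with hxt
  set yt : ℤ → X := fun k => if k ≤ -1 then xt (k + 1) - A k (xt k) else 0 with hyt
  have hx0 : xt 0 = 0 := by
    rw [hxt]
    dsimp only
    rw [if_neg (show ¬ ((0:ℤ) ≤ m - 1) by omega), if_neg (show ¬ ((0:ℤ) ≤ n - 1) by omega)]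
  have hsol : IsSolZ A Z yt xt := by
    refine ⟨fun k hk => ?_, ?_, fun k hk => ?_⟩
    · simp only [hyt, if_pos hk]; abel
    · rw [hx0]; exact Z.zero_mem
    · show xt k = 0
      rw [hxt]
      dsimp only
      rw [if_neg (show ¬ (k ≤ m - 1) by omega), if_neg (show ¬ (k ≤ n - 1) by omega)]
  have hxtb : ∃ C' : ℝ, ∀ i : ℤ, ‖xt i‖ ≤ C' := by
    refine exists_global_bound xt m (T m * C) (fun i hi => ?_) hsol.2.2
    have : xt i = -(T m • z i) := by simp only [hxt, if_pos (show i ≤ m - 1 by omega)]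
    rw [this, norm_neg, norm_smul, Real.norm_eq_abs, abs_of_pos (hTpos m le_rfl hmn)]
    exact mul_le_mul_of_nonneg_left (hC i (by omega)) (hTpos m le_rfl hmn).le
  have hyb : ∀ k : ℤ, ‖yt k‖ ≤ 1 := by
    intro k
    by_cases hk : k ≤ -1
    swap
    · simp [hyt, if_neg hk]
    simp only [hyt, if_pos hk]
    by_cases c1 : k + 1 ≤ m - 1
    · have h1 : xt (k + 1) = -(T m • z (k + 1)) := by simp only [hxt, if_pos c1]
      have h2 : xt k = -(T m • z k) := by simp only [hxt, if_pos (show k ≤ m - 1 by omega)]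
      rw [h1, h2, map_neg, map_smul, hzstep k, sub_self, norm_zero]
      exact zero_le_one
    by_cases c2 : k + 1 = m
    · have h1 : xt (k + 1) = -(T (m + 1) • z m) := by
        rw [c2]
        simp only [hxt, if_neg (show ¬ (m ≤ m - 1) by omega), if_pos (show m ≤ n - 1 by omega)]
      have h2 : xt k = -(T m • z k) := by simp only [hxt, if_pos (show k ≤ m - 1 by omega)]
      have h3 : A k (z k) = z m := by rw [hzstep k, c2]
      rw [h1, h2, map_neg, map_smul, h3, ← neg_smul, ← neg_smul, ← sub_smul]
      have h4 : -T (m + 1) - -T m = (b m)⁻¹ := by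
        have := hTsplit (m + 1) (by omega)
        have h5 : m + 1 - 1 = m := by omega
        rw [h5] at this
        rw [this]; ring
      rw [h4, norm_smul, Real.norm_eq_abs, abs_of_pos (inv_pos.2 (hbpos m le_rfl hmn))]
      have h6 : ‖z m‖ = b m := by rw [hzm]; simp [hb]
      rw [h6]
      exact le_of_eq (inv_mul_cancel₀ (hbpos m le_rfl hmn).ne')
    by_cases c3 : k + 1 ≤ n - 1
    · have hmk : m ≤ k := by omega
      have h1 : xt (k + 1) = -(T (k + 2) • z (k + 1)) := by
        have : k + 1 + 1 = k + 2 := by omega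
        simp only [hxt, if_neg (show ¬ (k + 1 ≤ m - 1) by omega), if_pos c3, this]
      have h2 : xt k = -(T (k + 1) • z k) := by
        simp only [hxt, if_neg (show ¬ (k ≤ m - 1) by omega), if_pos (show k ≤ n - 1 by omega)]
      rw [h1, h2, map_neg, map_smul, hzstep k, ← neg_smul, ← neg_smul, ← sub_smul]
      have h4 : -T (k + 2) - -T (k + 1) = (b (k + 1))⁻¹ := by
        have := hTsplit (k + 2) (by omega)
        have h5 : k + 2 - 1 = k + 1 := by omega
        rw [h5] at this
        rw [this]; ring
      have hbk : 0 < b (k + 1) := hbpos (k + 1) (by omega) (by omega)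
      rw [h4, norm_smul, Real.norm_eq_abs, abs_of_pos (inv_pos.2 hbk)]
      have h6 : ‖z (k + 1)‖ = b (k + 1) := by rw [hzPhi (k + 1) (by omega)]
      rw [h6]
      exact le_of_eq (inv_mul_cancel₀ hbk.ne')
    by_cases c4 : k + 1 = n
    · have hmk : m ≤ k := by omega
      have h1 : xt (k + 1) = 0 := by
        simp only [hxt, if_neg (show ¬ (k + 1 ≤ m - 1) by omega),
          if_neg (show ¬ (k + 1 ≤ n - 1) by omega)]
      have h2 : xt k = -(T (k + 1) • z k) := by
        simp only [hxt, if_neg (show ¬ (k ≤ m - 1) by omega), if_pos (show k ≤ n - 1 by omega)]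
      rw [h1, h2, map_neg, map_smul, hzstep k, zero_sub, neg_neg]
      have h4 : T (k + 1) = (b n)⁻¹ := by rw [c4, hTn]
      have hbn : 0 < b n := hbpos n hmn le_rfl
      rw [h4, norm_smul, Real.norm_eq_abs, abs_of_pos (inv_pos.2 hbn)]
      have h6 : ‖z (k + 1)‖ = b n := by rw [hzPhi (k + 1) (by omega), c4]
      rw [h6]
      exact le_of_eq (inv_mul_cancel₀ hbn.ne')
    · -- n ≤ k
      have h1 : xt (k + 1) = 0 := by
        simp only [hxt, if_neg (show ¬ (k + 1 ≤ m - 1) by omega),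
          if_neg (show ¬ (k + 1 ≤ n - 1) by omega)]
      have h2 : xt k = 0 := by
        simp only [hxt, if_neg (show ¬ (k ≤ m - 1) by omega),
          if_neg (show ¬ (k ≤ n - 1) by omega)]
      rw [h1, h2, map_zero, sub_zero, norm_zero]
      exact zero_le_one
  have hbd := HD yt xt 1 hyb hxtb hsol
  have hbT : ∀ i : ℤ, m ≤ i → i ≤ n - 1 → b i * T (i + 1) ≤ D := by
    intro i h1 h2
    have := hbd i
    rw [mul_one] at this
    have hxi : xt i = -(T (i + 1) • z i) := by
      simp only [hxt, if_neg (show ¬ (i ≤ m - 1) by omega), if_pos h2]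
    have h6 : ‖z i‖ = b i := by rw [hzPhi i h1]
    rw [hxi, norm_neg, norm_smul, Real.norm_eq_abs,
      abs_of_pos (hTpos (i + 1) (by omega) (by omega)), h6] at this
    linarith [this]
  -- downward induction: T i ≥ ((D+1)/D)^(n-i) * T n
  have hkey : ∀ i : ℤ, i ≤ n → m ≤ i → ((D + 1) / D) ^ (n - i).toNat * T n ≤ T i := by
    refine Int.le_induction_down ?_ ?_
    · intro _; simp
    · intro i hi ih hmi
      have h1 : b (i - 1) * T i ≤ D := by
        have := hbT (i - 1) hmi (by omega)
        have h5 : i - 1 + 1 = i := by omega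
        rwa [h5] at this
      have hTi : 0 < T i := hTpos i (by omega) hi
      have hbi : 0 < b (i - 1) := hbpos (i - 1) hmi (by omega)
      have hinv : T i / D ≤ (b (i - 1))⁻¹ := by
        rw [div_le_iff₀ hD0, inv_mul_eq_div, le_div_iff₀ hbi]
        linarith [h1]
      have hstep : (D + 1) / D * T i ≤ T (i - 1) := by
        have hsplit := hTsplit i hi
        have hid : (D + 1) / D * T i = T i + T i / D := by field_simp
        rw [hid, hsplit]
        linarith [hinv]
      have htn : (n - (i - 1)).toNat = (n - i).toNat + 1 := by omega
      have hTnpos : 0 < T n := hTpos n hmn le_rfl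
      calc ((D + 1) / D) ^ (n - (i - 1)).toNat * T n
          = (D + 1) / D * (((D + 1) / D) ^ (n - i).toNat * T n) := by
            rw [htn, pow_succ]; ring
        _ ≤ (D + 1) / D * T i := by
            refine mul_le_mul_of_nonneg_left (ih (by omega)) (by positivity)
        _ ≤ T (i - 1) := hstep
  -- conclude
  have hmn1 : m + 1 ≤ n := by omega
  have h1 : b m * T (m + 1) ≤ D := hbT m le_rfl (by omega)
  have h2 : ((D + 1) / D) ^ (n - (m + 1)).toNat * T n ≤ T (m + 1) := hkey (m + 1) hmn1 (by omega)
  have hbn : 0 < b n := hbpos n hmn le_rfl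
  have hT1 : 0 < T (m + 1) := hTpos (m + 1) (by omega) hmn1
  have hbm : b m = ‖x‖ := by simp [hb]
  have hwn : b n = ‖Phi A n m x‖ := rfl
  -- b m ≤ D / T (m+1) ≤ D * (D/(D+1))^(n-m-1) * b n
  have hstep1 : b m ≤ D / T (m + 1) := by
    rw [le_div_iff₀ hT1]; exact h1
  have hnu : ((D + 1) / D) ^ (n - (m + 1)).toNat * (b n)⁻¹ ≤ T (m + 1) := by
    rw [hTn] at h2; exact h2
  have hgeom : D / T (m + 1) ≤ D * (D / (D + 1)) ^ (n - (m + 1)).toNat * b n := by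
    rw [div_le_iff₀ hT1]
    have hmu : (D / (D + 1)) ^ (n - (m + 1)).toNat * ((D + 1) / D) ^ (n - (m + 1)).toNat
        = 1 := by
      rw [← mul_pow]
      have : D / (D + 1) * ((D + 1) / D) = 1 := by field_simp
      rw [this, one_pow]
    calc D = D * ((D / (D + 1)) ^ (n - (m + 1)).toNat *
          (((D + 1) / D) ^ (n - (m + 1)).toNat * (b n)⁻¹) * b n) := by
          have hmu1 : (D / (D + 1)) ^ (n - (m + 1)).toNat *
              (((D + 1) / D) ^ (n - (m + 1)).toNat * (b n)⁻¹) * b n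
              = ((D / (D + 1)) ^ (n - (m + 1)).toNat *
                ((D + 1) / D) ^ (n - (m + 1)).toNat) * ((b n)⁻¹ * b n) := by ring
          rw [hmu1, hmu, one_mul, inv_mul_cancel₀ hbn.ne', mul_one]
      _ ≤ D * ((D / (D + 1)) ^ (n - (m + 1)).toNat * T (m + 1) * b n) := by
          refine mul_le_mul_of_nonneg_left ?_ hD0.le
          refine mul_le_mul_of_nonneg_right (mul_le_mul_of_nonneg_left hnu (by positivity))
            hbn.le
      _ = D * (D / (D + 1)) ^ (n - (m + 1)).toNat * b n * T (m + 1) := by ring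
  have hpow : (D / (D + 1)) ^ (n - (m + 1)).toNat ≤
      2 * (D / (D + 1)) ^ (n - m).toNat := by
    have htn : (n - m).toNat = (n - (m + 1)).toNat + 1 := by omega
    rw [htn, pow_succ]
    have hpp : (0:ℝ) < (D / (D + 1)) ^ (n - (m + 1)).toNat := by positivity
    have h2mu : 1 ≤ 2 * (D / (D + 1)) := by
      have hq : 2 * (D / (D + 1)) = 2 * D / (D + 1) := by ring
      rw [hq, le_div_iff₀ (by linarith : (0:ℝ) < D + 1)]
      linarith
    nlinarith [hpp]
  calc ‖x‖ = b m := hbm.symm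
    _ ≤ D / T (m + 1) := hstep1
    _ ≤ D * (D / (D + 1)) ^ (n - (m + 1)).toNat * b n := hgeom
    _ ≤ D * (2 * (D / (D + 1)) ^ (n - m).toNat) * b n := by
        refine mul_le_mul_of_nonneg_right (mul_le_mul_of_nonneg_left hpow hD0.le) hbn.le
    _ = 2 * D * (D / (D + 1)) ^ (n - m).toNat * ‖Phi A n m x‖ := by rw [← hwn]; ring

end Aux7
theorem dichotomy_of_admissibility_Zminus {X : Type u} [NormedAddCommGroup X]
    [NormedSpace ℝ X] [CompleteSpace X] (A : ℤ → X →L[ℝ] X)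
    (hadm : ∀ y : ℤ → X, (∃ C : ℝ, ∀ n : ℤ, n ≤ -1 → ‖y n‖ ≤ C) →
      ∃ x : ℤ → X, (∃ C : ℝ, ∀ n : ℤ, n ≤ 0 → ‖x n‖ ≤ C) ∧
        ∀ n : ℤ, n ≤ -1 → x (n + 1) = A n (x n) + y n)
    (hcompl : IsComplementedSubspace (Uset A 0))
    (huniq : ∀ x : ℤ → X, x 0 = 0 → (∃ C : ℝ, ∀ n : ℤ, n ≤ 0 → ‖x n‖ ≤ C) →
      (∀ n : ℤ, n ≤ 0 → x n = A (n - 1) (x (n - 1))) → ∀ n : ℤ, n ≤ 0 → x n = 0) :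
    ExpDichotomy {n : ℤ | n ≤ 0} {n : ℤ | n ≤ -1} A := by
  classical
  obtain ⟨Z, hZclosed, hZU, hdecomp⟩ := hcompl
  have hZU' : ∀ v ∈ Uset A 0, v ∈ (Z : Set X) → v = 0 := hZU
  have hdecomp' : ∀ v : X, ∃ s ∈ Uset A 0, ∃ z ∈ (Z : Set X), v = s + z := hdecomp
  obtain ⟨D, hD2, HD⟩ := exists_solZ_bound hZclosed hadm hdecomp' hZU' huniq
  have hD0 : (0:ℝ) < D := by linarith
  -- the projection-valued function
  have hPf : ∃ Pf : ℤ → X → X, ∀ t : ℤ, t ≤ 0 → ∀ v : X,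
      Phi A 0 t (Pf t v) ∈ (Z : Set X) ∧ v - Pf t v ∈ Uset A t ∧ ‖Pf t v‖ ≤ D * ‖v‖ := by
    refine ⟨fun t v => if h : t ≤ 0 then
      (decomp_exists hadm hdecomp' HD h v).choose else 0, fun t ht v => ?_⟩
    simp only [dif_pos ht]
    exact (decomp_exists hadm hdecomp' HD ht v).choose_spec
  obtain ⟨Pf, hPf⟩ := hPf
  have hPuniq : ∀ t : ℤ, t ≤ 0 → ∀ v e : X, Phi A 0 t e ∈ (Z : Set X) →
      v - e ∈ Uset A t → e = Pf t v := by
    intro t ht v e he1 he2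
    have h1 : Phi A 0 t (e - Pf t v) ∈ (Z : Set X) := by
      rw [map_sub]; exact Z.sub_mem he1 (hPf t ht v).1
    have h2 : e - Pf t v ∈ Uset A t := by
      have h3 : e - Pf t v = (v - Pf t v) - (v - e) := by abel
      rw [h3]; exact Uset_sub A (hPf t ht v).2.1 he2
    have := decomp_unique hZU' huniq ht h1 h2
    rwa [sub_eq_zero] at this
  -- build continuous linear projections
  have hPclm : ∀ t : ℤ, ∃ Pt : X →L[ℝ] X, t ≤ 0 → ∀ v : X, Pt v = Pf t v := by
    intro t
    by_cases ht : t ≤ 0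
    · refine ⟨LinearMap.mkContinuous
        { toFun := Pf t
          map_add' := ?_
          map_smul' := ?_ } D ?_, fun _ v => rfl⟩
      · intro u v
        refine (hPuniq t ht (u + v) (Pf t u + Pf t v) ?_ ?_).symm
        · rw [map_add]; exact Z.add_mem (hPf t ht u).1 (hPf t ht v).1
        · have h3 : u + v - (Pf t u + Pf t v) = (u - Pf t u) + (v - Pf t v) := by abel
          rw [h3]; exact Uset_add A (hPf t ht u).2.1 (hPf t ht v).2.1
      · intro c v
        dsimp only [RingHom.id_apply]
        refine (hPuniq t ht (c • v) (c • Pf t v) ?_ ?_).symm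
        · rw [map_smul]; exact Z.smul_mem c (hPf t ht v).1
        · have h3 : c • v - c • Pf t v = c • (v - Pf t v) := by rw [smul_sub]
          rw [h3]; exact Uset_smul A c (hPf t ht v).2.1
      · intro v; exact (hPf t ht v).2.2
    · exact ⟨0, fun h => absurd h ht⟩
  choose P hP using hPclm
  have hPZ : ∀ t : ℤ, t ≤ 0 → ∀ v : X, Phi A 0 t (P t v) ∈ (Z : Set X) := by
    intro t ht v; rw [hP t ht v]; exact (hPf t ht v).1
  have hPU : ∀ t : ℤ, t ≤ 0 → ∀ v : X, v - P t v ∈ Uset A t := by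
    intro t ht v; rw [hP t ht v]; exact (hPf t ht v).2.1
  have hPnorm : ∀ t : ℤ, t ≤ 0 → ∀ v : X, ‖P t v‖ ≤ D * ‖v‖ := by
    intro t ht v; rw [hP t ht v]; exact (hPf t ht v).2.2
  have hPchar : ∀ t : ℤ, t ≤ 0 → ∀ v e : X, Phi A 0 t e ∈ (Z : Set X) →
      v - e ∈ Uset A t → e = P t v := by
    intro t ht v e h1 h2; rw [hP t ht v]; exact hPuniq t ht v e h1 h2
  have hker : ∀ t : ℤ, t ≤ 0 → ∀ v : X, (P t v = 0 ↔ v ∈ Uset A t) := by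
    intro t ht v
    constructor
    · intro h
      have := hPU t ht v
      rwa [h, sub_zero] at this
    · intro hv
      exact (hPchar t ht v 0 (by rw [map_zero]; exact Z.zero_mem) (by rwa [sub_zero])).symm
  -- the cocycle identity through one step
  have hPhi01 : ∀ n : ℤ, n ≤ -1 → ∀ w : X, Phi A 0 (n + 1) (A n w) = Phi A 0 n w := by
    intro n hn w
    have h1 : Phi A (n + 1) n w = A n w := by
      rw [Phi_apply_succ A (le_refl n), Phi_self_apply]
    rw [← h1, Phi_comp A (by omega) w 0 (by omega)]
  -- constants
  set μ : ℝ := D / (D + 1) with hμ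
  have hμ0 : (0:ℝ) < μ := by positivity
  have hμ1 : μ < 1 := by
    rw [hμ, div_lt_one (by linarith)]; linarith
  set α : ℝ := -Real.log μ with hα
  have hα0 : 0 < α := by
    rw [hα]
    have := Real.log_neg hμ0 hμ1
    linarith
  have hexpνμ : Real.exp (-α) = μ := by rw [hα, neg_neg]; exact Real.exp_log hμ0
  have hexp : ∀ s t : ℤ, t ≤ s → μ ^ (s - t).toNat = Real.exp (-α * ((s:ℝ) - t)) := by
    intro s t hts
    have h1 : (((s - t).toNat : ℕ) : ℝ) = (s:ℝ) - t := by
      rw [show (((s - t).toNat : ℕ) : ℝ) = (((s - t).toNat : ℤ) : ℝ) by push_cast; ring,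
        Int.toNat_of_nonneg (by omega)]
      push_cast; ring
    rw [← hexpνμ, ← Real.exp_nat_mul, h1]
    ring_nf
  have hK0 : (0:ℝ) < 4 * D * D := by nlinarith
  refine ⟨P, 4 * D * D, α, hK0, hα0, ?_, ?_, ?_, ?_, ?_⟩
  · -- projections
    intro n hn
    have hn' : n ≤ 0 := hn
    ext v
    simp only [ContinuousLinearMap.comp_apply]
    exact (hPchar n hn' (P n v) (P n v) (hPZ n hn' v)
      (by rw [sub_self]; exact Uset_zero A n)).symm
  · -- commutation
    intro n hn
    have hn' : n ≤ -1 := hn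
    ext v
    simp only [ContinuousLinearMap.comp_apply]
    refine hPchar (n + 1) (by omega) (A n v) (A n (P n v)) ?_ ?_
    · rw [hPhi01 n hn' (P n v)]
      exact hPZ n (by omega) v
    · rw [← map_sub]
      exact Uset_step A (hPU n (by omega) v)
  · -- bijectivity on kernels
    intro n hn
    have hn' : n ≤ -1 := hn
    refine ⟨?_, ?_, ?_⟩
    · intro v hv
      have hvU : v ∈ Uset A n := (hker n (by omega) v).1 hv
      exact (hker (n + 1) (by omega) (A n v)).2 (Uset_step A hvU)
    · intro u hu v hv heq
      have huU : u ∈ Uset A n := (hker n (by omega) u).1 hu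
      have hvU : v ∈ Uset A n := (hker n (by omega) v).1 hv
      have hd : u - v ∈ Uset A n := Uset_sub A huU hvU
      have hA0 : A n (u - v) = 0 := by rw [map_sub, heq, sub_self]
      have hPhi0 : Phi A 0 n (u - v) = 0 := by
        rw [← hPhi01 n hn' (u - v), hA0, map_zero]
      have := Uset_vanish huniq (by omega) hd hPhi0
      rwa [sub_eq_zero] at this
    · intro w hw
      have hwU : w ∈ Uset A (n + 1) := (hker (n + 1) (by omega) w).1 hw
      obtain ⟨x, hx0, ⟨C, hC⟩, hrec⟩ := hwU
      have huU : x n ∈ Uset A n :=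
        ⟨x, rfl, ⟨C, fun k hk => hC k (by omega)⟩, fun k hk => hrec k (by omega)⟩
      refine ⟨x n, (hker n (by omega) (x n)).2 huU, ?_⟩
      have := hrec (n + 1) le_rfl
      have h5 : n + 1 - 1 = n := by omega
      rw [h5] at this
      rw [← this, hx0]
  · -- stable estimate
    intro m n hm hn hnm
    have hm' : m ≤ 0 := hm
    have hn' : n ≤ 0 := hn
    have hE : (0:ℝ) ≤ 4 * D * D * Real.exp (-α * ((m:ℝ) - n)) :=
      mul_nonneg hK0.le (Real.exp_pos _).le
    refine ContinuousLinearMap.opNorm_le_bound _ hE fun v => ?_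
    simp only [ContinuousLinearMap.comp_apply]
    set t := (m - n).toNat with htdef
    have hst := stable_estimate hD2 HD hnm hm' (hPZ n hn' v)
    have hlm : ((D - 1) / D) ^ t ≤ μ ^ t := by
      refine pow_le_pow_left₀ (div_nonneg (by linarith) hD0.le) ?_ t
      rw [hμ, div_le_div_iff₀ hD0 (by linarith)]
      nlinarith
    have hμt0 : (0:ℝ) ≤ μ ^ t := by positivity
    calc ‖Phi A m n (P n v)‖ ≤ D * ((D - 1) / D) ^ t * ‖P n v‖ := hst
      _ ≤ D * μ ^ t * ‖P n v‖ := by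
          refine mul_le_mul_of_nonneg_right ?_ (norm_nonneg _)
          exact mul_le_mul_of_nonneg_left hlm hD0.le
      _ ≤ D * μ ^ t * (D * ‖v‖) := by
          refine mul_le_mul_of_nonneg_left (hPnorm n hn' v) ?_
          positivity
      _ = (D * D) * μ ^ t * ‖v‖ := by ring
      _ ≤ (4 * D * D) * μ ^ t * ‖v‖ := by
          refine mul_le_mul_of_nonneg_right (mul_le_mul_of_nonneg_right ?_ hμt0)
            (norm_nonneg _)
          nlinarith
      _ = 4 * D * D * Real.exp (-α * ((m:ℝ) - n)) * ‖v‖ := by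
          rw [hexp m n hnm]
  · -- unstable estimate
    intro m n hm hn hmn x y hPx hPhieq
    have hm' : m ≤ 0 := hm
    have hn' : n ≤ 0 := hn
    have hxU : x ∈ Uset A m := (hker m hm' x).1 hPx
    set t := (n - m).toNat with htdef
    have hust := unstable_estimate hD2 HD huniq hmn hn' hxU
    have hμt0 : (0:ℝ) ≤ μ ^ t := by positivity
    have hyb : ‖Phi A n m x‖ ≤ (1 + D) * ‖y‖ := by
      rw [hPhieq]
      calc ‖y - P n y‖ ≤ ‖y‖ + ‖P n y‖ := norm_sub_le _ _
        _ ≤ ‖y‖ + D * ‖y‖ := by linarith [hPnorm n hn' y]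
        _ = (1 + D) * ‖y‖ := by ring
    calc ‖x‖ ≤ 2 * D * μ ^ t * ‖Phi A n m x‖ := hust
      _ ≤ 2 * D * μ ^ t * ((1 + D) * ‖y‖) := by
          refine mul_le_mul_of_nonneg_left hyb ?_
          positivity
      _ = (2 * D * (1 + D)) * μ ^ t * ‖y‖ := by ring
      _ ≤ (4 * D * D) * μ ^ t * ‖y‖ := by
          refine mul_le_mul_of_nonneg_right (mul_le_mul_of_nonneg_right ?_ hμt0)
            (norm_nonneg _)
          nlinarith
      _ = 4 * D * D * Real.exp (-α * ((n:ℝ) - m)) * ‖y‖ := by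
          rw [hexp n m hmn]

end
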